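/- Let d ≥ 2 and let P ⊆ ℝ^d be a d-dimensional centrally-symmetric lattice polytope with P°_ℤ = {0} and |P_ℤ| = 3^d. Let F be a facet of P and let x be a lattice point in the relative interior of F. Then x + (P_ℤ \ F_ℤ) ⊆ P_ℤ, i.e., for every lattice point y of P not lying in F, the point x + y is again a lattice point of P. -/

import Mathlib

open Set

section Helpers

lemma intrinsic_ball {d : ℕ} {s : Set (Fin d → ℝ)} {x : Fin d → ℝ}
    (hx : x ∈ intrinsicInterior ℝ s) :
    ∃ δ : ℝ, 0 < δ ∧ ∀ p : Fin d → ℝ, p ∈ affineSpan ℝ s → dist p x < δ → p ∈ s := by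
  obtain ⟨y, hy, hyx⟩ := hx
  rw [mem_interior_iff_mem_nhds, Metric.mem_nhds_iff] at hy
  obtain ⟨δ, hδ, hball⟩ := hy
  refine ⟨δ, hδ, fun p hp hd => ?_⟩
  have : (⟨p, hp⟩ : affineSpan ℝ s) ∈ Metric.ball y δ := by
    simp only [Metric.mem_ball, Subtype.dist_eq, hyx]
    exact hd
  exact hball this

lemma move_in_face {d : ℕ} {s : Set (Fin d → ℝ)} {x : Fin d → ℝ}
    (hx : x ∈ intrinsicInterior ℝ s) {v : Fin d → ℝ} (hv : v ∈ vectorSpan ℝ s) :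
    ∃ ε : ℝ, 0 < ε ∧ x + ε • v ∈ s := by
  obtain ⟨δ, hδ, hball⟩ := intrinsic_ball hx
  have hxs : x ∈ s := intrinsicInterior_subset hx
  by_cases hv0 : v = 0
  · exact ⟨1, one_pos, by simpa [hv0] using hxs⟩
  have hnv : 0 < ‖v‖ := norm_pos_iff.2 hv0
  refine ⟨δ / (2 * ‖v‖), by positivity, ?_⟩
  have hmem : x + (δ / (2 * ‖v‖)) • v ∈ affineSpan ℝ s := by
    have h1 : ((δ / (2 * ‖v‖)) • v) ∈ (affineSpan ℝ s).direction := by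
      rw [direction_affineSpan]
      exact Submodule.smul_mem _ _ hv
    have := AffineSubspace.vadd_mem_of_mem_direction h1 (mem_affineSpan ℝ hxs)
    simpa [vadd_eq_add, add_comm] using this
  refine hball _ hmem ?_
  have : dist (x + (δ / (2 * ‖v‖)) • v) x = ‖(δ / (2 * ‖v‖)) • v‖ := by
    rw [dist_eq_norm]; congr 1; abel
  rw [this, norm_smul, Real.norm_eq_abs, abs_of_pos (by positivity)]
  rw [div_mul_eq_mul_div, div_lt_iff₀ (by positivity)]
  nlinarith

lemma intrinsic_to_interior {d : ℕ} {s : Set (Fin d → ℝ)} (hdim : affineSpan ℝ s = ⊤)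
    {x : Fin d → ℝ} (hx : x ∈ intrinsicInterior ℝ s) : x ∈ interior s := by
  obtain ⟨δ, hδ, hball⟩ := intrinsic_ball hx
  rw [mem_interior_iff_mem_nhds, Metric.mem_nhds_iff]
  exact ⟨δ, hδ, fun p hp => hball p (hdim ▸ AffineSubspace.mem_top ℝ _ _) hp⟩

end Helpers

noncomputable section

/-- Coordinatewise cast of an integer vector into `ℝ^d`. -/
def ic {d : ℕ} (v : Fin d → ℤ) : Fin d → ℝ := fun i => (v i : ℝ)

/-- `P_ℤ`: the set of lattice points of `ℤ^d` lying in `P`. -/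
def latticePts {d : ℕ} (P : Set (Fin d → ℝ)) : Set (Fin d → ℤ) := {x | ic x ∈ P}

/-- `P°_ℤ`: the set of lattice points of `ℤ^d` lying in the relative interior of `P`. -/
def relintLatticePts {d : ℕ} (P : Set (Fin d → ℝ)) : Set (Fin d → ℤ) :=
  {x | ic x ∈ intrinsicInterior ℝ P}

/-- `P` is a lattice polytope: the convex hull of finitely many points of `ℤ^d`. -/
def IsLatticePolytope {d : ℕ} (P : Set (Fin d → ℝ)) : Prop :=
  ∃ V : Finset (Fin d → ℤ), P = convexHull ℝ (ic '' ↑V)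

/-- `F` is a face of the convex set `P`: a convex extreme subset of `P`. -/
def IsFaceOf {d : ℕ} (P F : Set (Fin d → ℝ)) : Prop :=
  IsExtreme ℝ P F ∧ Convex ℝ F
/-- Let `P` be a `d`-dimensional (`d ≥ 2`) centrally-symmetric lattice polytope with
    `P°_ℤ = {0}` and `|P_ℤ| = 3^d`, let `F` be a facet of `P` and let `x` be a lattice
    point in the relative interior of `F`.  Then for every lattice point `y` of `P`
    not lying in `F`, the point `x + y` is again a lattice point of `P`. -/
theorem add_interior_facet_point {d : ℕ} (hd : 2 ≤ d) (P : Set (Fin d → ℝ))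
    (hpoly : IsLatticePolytope P) (hdim : affineSpan ℝ P = ⊤)
    (hsym : P = -P) (hint : relintLatticePts P = {0})
    (hcard : (latticePts P).ncard = 3 ^ d)
    (F : Set (Fin d → ℝ)) (hF : IsFaceOf P F)
    (hfacet : Module.finrank ℝ (vectorSpan ℝ F) = d - 1)
    (x : Fin d → ℤ) (hx : ic x ∈ intrinsicInterior ℝ F) :
    ∀ y : Fin d → ℤ, y ∈ latticePts P → ic y ∉ F → x + y ∈ latticePts P := by
  intro y hy hyF
  obtain ⟨V, hV⟩ := hpoly
  have hconv : Convex ℝ P := hV ▸ convex_convexHull ℝ _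
  -- 0 is an interior point of P
  have h0rel : (0 : Fin d → ℤ) ∈ relintLatticePts P := by rw [hint]; rfl
  have hic0 : ic (0 : Fin d → ℤ) = 0 := funext fun i => by simp [ic]
  have h0P : (0 : Fin d → ℝ) ∈ interior P :=
    intrinsic_to_interior hdim (by rw [← hic0]; exact h0rel)
  -- membership of negatives
  have hneg : ∀ v : Fin d → ℤ, v ∈ latticePts P → -ic v ∈ P := by
    intro v hv
    rw [hsym, Set.mem_neg, neg_neg]
    exact hv
  -- the mod 3 reduction map
  set φ : (Fin d → ℤ) → (Fin d → ZMod 3) := fun u i => ((u i : ℤ) : ZMod 3) with hφ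
  -- injectivity of φ on latticePts P
  have hinj : Set.InjOn φ (latticePts P) := by
    intro u hu v hv huv
    have hdvd : ∀ i, (3 : ℤ) ∣ u i - v i := by
      intro i
      have : ((u i : ℤ) : ZMod 3) = ((v i : ℤ) : ZMod 3) := congrFun huv i
      rw [ZMod.intCast_eq_intCast_iff] at this
      exact (Int.ModEq.dvd this.symm)
    set k : Fin d → ℤ := fun i => (u i - v i) / 3 with hk
    have hk3 : ∀ i, 3 * k i = u i - v i := fun i => Int.mul_ediv_cancel' (hdvd i)
    have hm : ((1:ℝ)/2) • ic u + ((1:ℝ)/2) • (-ic v) ∈ P :=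
      hconv hu (hneg v hv) (by norm_num) (by norm_num) (by norm_num)
    have hkint : ic k ∈ interior P := by
      have h2 := hconv.combo_interior_self_mem_interior h0P hm
        (by norm_num : (0:ℝ) < 1/3) (by norm_num : (0:ℝ) ≤ 2/3) (by norm_num)
      have heq : ic k = ((1:ℝ)/3) • (0 : Fin d → ℝ) +
          ((2:ℝ)/3) • (((1:ℝ)/2) • ic u + ((1:ℝ)/2) • (-ic v)) := by
        funext i
        have h3 := hk3 i
        have : (3:ℝ) * (k i : ℝ) = (u i : ℝ) - (v i : ℝ) := by exact_mod_cast h3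
        simp only [ic, Pi.add_apply, Pi.smul_apply, Pi.zero_apply, Pi.neg_apply,
          smul_eq_mul]
        linarith
      rw [heq]; exact h2
    have hk0 : k ∈ relintLatticePts P :=
      interior_subset_intrinsicInterior hkint
    rw [hint, Set.mem_singleton_iff] at hk0
    funext i
    have := hk3 i
    rw [hk0] at this
    simp at this
    omega
  -- finiteness
  have hfin : (latticePts P).Finite :=
    Set.finite_of_ncard_ne_zero (by rw [hcard]; positivity)
  -- surjectivity: image of φ is everything
  have himg : φ '' (latticePts P) = (univ : Set (Fin d → ZMod 3)) := by
    refine Set.eq_of_subset_of_ncard_le (subset_univ _) ?_ finite_univ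
    rw [Set.ncard_image_of_injOn hinj, hcard, Set.ncard_univ,
      Nat.card_eq_fintype_card]
    simp [ZMod.card]
  -- pick z ≡ x + y (mod 3) in latticePts P
  have hzex : φ (x + y) ∈ φ '' (latticePts P) := by rw [himg]; trivial
  obtain ⟨z, hz, hφz⟩ := hzex
  have hdvd : ∀ i, (3 : ℤ) ∣ x i + y i - z i := by
    intro i
    have : ((z i : ℤ) : ZMod 3) = (((x + y) i : ℤ) : ZMod 3) := congrFun hφz i
    rw [ZMod.intCast_eq_intCast_iff] at this
    simpa [Pi.add_apply] using (Int.ModEq.dvd this)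
  set w : Fin d → ℤ := fun i => (x i + y i - z i) / 3 with hwdef
  have hw3 : ∀ i, 3 * w i = x i + y i - z i := fun i => Int.mul_ediv_cancel' (hdvd i)
  have hxF : ic x ∈ F := intrinsicInterior_subset hx
  have hxP : ic x ∈ P := hF.1.1 hxF
  have hyP : ic y ∈ P := hy
  have hnegz : -ic z ∈ P := hneg z hz
  have hicw : ic w = ((1:ℝ)/3) • (ic x + ic y + (-ic z)) := by
    funext i
    have h3 := hw3 i
    have : (3:ℝ) * (w i : ℝ) = (x i : ℝ) + (y i : ℝ) - (z i : ℝ) := by exact_mod_cast h3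
    simp only [ic, Pi.add_apply, Pi.smul_apply, Pi.neg_apply, smul_eq_mul]
    linarith
  have hwP : ic w ∈ P := by
    have hm : ((1:ℝ)/2) • ic x + ((1:ℝ)/2) • ic y ∈ P :=
      hconv hxP hyP (by norm_num) (by norm_num) (by norm_num)
    have h2 : ((2:ℝ)/3) • (((1:ℝ)/2) • ic x + ((1:ℝ)/2) • ic y) + ((1:ℝ)/3) • (-ic z) ∈ P :=
      hconv hm hnegz (by norm_num) (by norm_num) (by norm_num)
    have : ic w = ((2:ℝ)/3) • (((1:ℝ)/2) • ic x + ((1:ℝ)/2) • ic y) + ((1:ℝ)/3) • (-ic z) := by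
      rw [hicw]
      funext i
      simp only [Pi.add_apply, Pi.smul_apply, Pi.neg_apply, smul_eq_mul]
      ring
    rw [this]; exact h2
  -- main claim : w = 0
  have hw0 : w = 0 := by
    by_contra hw0
    have hwz : w ∈ latticePts P := hwP
    have hwni : ic w ∉ interior P := by
      intro h
      have : w ∈ relintLatticePts P := interior_subset_intrinsicInterior h
      rw [hint, Set.mem_singleton_iff] at this
      exact hw0 this
    obtain ⟨f, hf⟩ := geometric_hahn_banach_open_point hconv.interior isOpen_interior hwni
    set C : ℝ := f (ic w) with hC
    have hC0 : 0 < C := by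
      have := hf _ h0P
      simpa using this
    have hle : ∀ a ∈ P, f a ≤ C := by
      intro a ha
      by_contra hlt
      push_neg at hlt
      have hfa : 0 < f a := lt_trans hC0 hlt
      set t : ℝ := C / f a with ht
      have ht0 : 0 ≤ t := le_of_lt (div_pos hC0 hfa)
      have ht1 : t < 1 := (div_lt_one hfa).2 hlt
      have hmem : t • a ∈ interior P := by
        have := hconv.combo_interior_self_mem_interior h0P ha
          (by linarith : (0:ℝ) < 1 - t) ht0 (by ring)
        simpa using this
      have := hf _ hmem
      rw [map_smul, smul_eq_mul, ht, div_mul_cancel₀ _ (ne_of_gt hfa)] at this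
      exact lt_irrefl _ this
    have hsum : f (ic x) + f (ic y) + f (-ic z) = 3 * C := by
      have h3 : (3:ℝ) • ic w = ic x + ic y + (-ic z) := by
        rw [hicw, smul_smul]
        norm_num
      have : f ((3:ℝ) • ic w) = f (ic x + ic y + -ic z) := by rw [h3]
      rw [map_smul, smul_eq_mul, map_add, map_add] at this
      linarith [this]
    have hfx : f (ic x) = C := by
      have h1 := hle _ hxP
      have h2 := hle _ hyP
      have h3 := hle _ hnegz
      linarith
    have hfy : f (ic y) = C := by
      have h1 := hle _ hxP
      have h2 := hle _ hyP
      have h3 := hle _ hnegz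
      linarith
    -- f is constant C on F
    have hconstF : ∀ p ∈ F, f p = C := by
      intro p hp
      obtain ⟨ε, hε, hmem⟩ := move_in_face hx
        (show ic x - p ∈ vectorSpan ℝ F by
          simpa using vsub_mem_vectorSpan ℝ hxF hp)
      have h1 : f (ic x + ε • (ic x - p)) ≤ C := hle _ (hF.1.1 hmem)
      have h2 : f p ≤ C := hle _ (hF.1.1 hp)
      rw [map_add, map_smul, map_sub, smul_eq_mul, hfx] at h1
      nlinarith
    -- vectorSpan F = ker of f
    set g : (Fin d → ℝ) →ₗ[ℝ] ℝ := (f : (Fin d → ℝ) →ₗ[ℝ] ℝ) with hg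
    have hgf : ∀ v, g v = f v := fun v => rfl
    have hker : vectorSpan ℝ F ≤ LinearMap.ker g := by
      rw [vectorSpan_def]
      rw [Submodule.span_le]
      rintro v ⟨p, hp, q, hq, rfl⟩
      simp only [SetLike.mem_coe, LinearMap.mem_ker, vsub_eq_sub, map_sub, hgf]
      rw [hconstF p hp, hconstF q hq, sub_self]
    have hrange : LinearMap.range g = ⊤ := by
      rw [LinearMap.range_eq_top]
      intro r
      refine ⟨(r / C) • ic w, ?_⟩
      rw [map_smul, smul_eq_mul, hgf, ← hC, div_mul_cancel₀ _ (ne_of_gt hC0)]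
    have hkerrank : Module.finrank ℝ (LinearMap.ker g) = d - 1 := by
      have h1 := LinearMap.finrank_range_add_finrank_ker g
      rw [hrange, finrank_top, Module.finrank_self, Module.finrank_fin_fun] at h1
      omega
    have hspan_eq : vectorSpan ℝ F = LinearMap.ker g :=
      Submodule.eq_of_le_of_finrank_eq hker (by rw [hfacet, hkerrank])
    have hxy : ic x - ic y ∈ vectorSpan ℝ F := by
      rw [hspan_eq]
      simp only [LinearMap.mem_ker, map_sub, hgf]
      rw [hfx, hfy, sub_self]
    obtain ⟨ε, hε, hqF⟩ := move_in_face hx hxy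
    set q : Fin d → ℝ := ic x + ε • (ic x - ic y) with hq
    have h1ε : (1:ℝ) + ε ≠ 0 := by positivity
    have hseg : ic x ∈ openSegment ℝ q (ic y) := by
      refine ⟨1/(1+ε), ε/(1+ε), by positivity, by positivity, by field_simp, ?_⟩
      funext i
      simp only [hq, Pi.add_apply, Pi.smul_apply, Pi.sub_apply, smul_eq_mul]
      field_simp
      ring
    have := hF.1.2 (hF.1.1 hqF) hyP hxF hseg
    exact hyF (hF.1.2 hyP (hF.1.1 hqF) hxF (by rw [openSegment_symm]; exact hseg))
  -- conclude
  have hxyz : x + y = z := by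
    funext i
    have := hw3 i
    rw [hw0] at this
    simp only [Pi.zero_apply, mul_zero] at this
    simp only [Pi.add_apply]
    omega
  show ic (x + y) ∈ P
  have : ic (x + y) = ic z := by rw [hxyz]
  rw [this]
  exact hz
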